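/- Conservation of mass and uniform energy bounds for the semi-discretization (Lemma 4.4): Let (ρ_h, m_h) be a semi-discrete solution on [0,T] with initial data (ρ_{0,h}, m_{0,h}) = (ρ_h(0), m_h(0)). Then for every t ∈ [0,T]: Σ_e ∫_0^{ℓ_e} ρ_h(t,x) dx = Σ_e ∫_0^{ℓ_e} ρ_{0,h}(x) dx, and Σ_e ∫_0^{ℓ_e} ( m_h(t,x)²/(2ρ_h(t,x)) + P(ρ_h(t,x)) ) dx + ∫_0^t Σ_e ∫_0^{ℓ_e} ( a_e |∂_x m_h(s,x)|²/ρ_h(s,x)² + b_e |m_h(s,x)|³/ρ_h(s,x)² ) dx ds = Σ_e ∫_0^{ℓ_e} ( m_{0,h}(x)²/(2ρ_{0,h}(x)) + P(ρ_{0,h}(x)) ) dx, where P = P_e on edge e. -/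

import Mathlib

/-- The network pairing `(u, w)_E = Σ_{e∈E} ∫_0^{ℓ_e} u_e w_e dx` of two families of
functions on the edges of a pipe network. -/
noncomputable def pairE {E : Type} [Fintype E] (ℓ : E → ℝ) (u w : E → ℝ → ℝ) : ℝ :=
  ∑ e, ∫ x in (0 : ℝ)..(ℓ e), u e x * w e x

/-- `q` is piecewise constant on the uniform mesh of `[0, ℓ e]` into `N e` subintervals,
for every edge `e`.  This is the space `Q_h` of the mixed finite element method
(the value at the right endpoint `ℓ e` is irrelevant). -/
def IsPwConst {E : Type} (N : E → ℕ) (ℓ : E → ℝ) (q : E → ℝ → ℝ) : Prop :=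
  ∀ e, ∀ i : ℕ, i < N e →
    ∀ x ∈ Set.Ico ((i : ℝ) * ℓ e / (N e : ℝ)) (((i : ℝ) + 1) * ℓ e / (N e : ℝ)),
      q e x = q e ((i : ℝ) * ℓ e / (N e : ℝ))

/-- `v` is continuous on `[0, ℓ e]` and affine on each subinterval of the uniform mesh
of `[0, ℓ e]` into `N e` subintervals, for every edge `e`. -/
def IsPwAffine {E : Type} (N : E → ℕ) (ℓ : E → ℝ) (v : E → ℝ → ℝ) : Prop :=
  (∀ e, ContinuousOn (v e) (Set.Icc 0 (ℓ e))) ∧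
  (∀ e, ∀ i : ℕ, i < N e → ∃ α β : ℝ,
    ∀ x ∈ Set.Icc ((i : ℝ) * ℓ e / (N e : ℝ)) (((i : ℝ) + 1) * ℓ e / (N e : ℝ)),
      v e x = α * x + β)

/-- The vertex sum `Σ_{e∈E(w)} f_e(w) n_e(w)` at a vertex `w`, where `n_e(w) = -1` if
`w` is the initial vertex `src e`, `n_e(w) = +1` if `w` is the terminal vertex `dst e`,
and a function `f_e` is evaluated at `src e` as `f e 0` and at `dst e` as `f e (ℓ e)`. -/
noncomputable def vtxSum {V E : Type} [Fintype E] [DecidableEq V]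
    (src dst : E → V) (ℓ : E → ℝ) (f : E → ℝ → ℝ) (w : V) : ℝ :=
  ∑ e, ((if dst e = w then f e (ℓ e) else 0) - (if src e = w then f e 0 else 0))

/-- The space `V_h`: continuous piecewise affine families that satisfy the conservative
coupling condition `Σ_{e∈E(w)} v_e(w) n_e(w) = 0` at every vertex `w`. -/
def InVh {V E : Type} [Fintype E] [DecidableEq V]
    (src dst : E → V) (N : E → ℕ) (ℓ : E → ℝ) (v : E → ℝ → ℝ) : Prop :=
  IsPwAffine N ℓ v ∧ ∀ w : V, vtxSum src dst ℓ v w = 0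

/-- The subinterval-wise (broken) spatial derivative of a piecewise affine family `v`:
on the subinterval of the mesh containing `x`, it is the slope of `v e` there. -/
noncomputable def Dx {E : Type} (N : E → ℕ) (ℓ : E → ℝ) (v : E → ℝ → ℝ)
    (e : E) (x : ℝ) : ℝ :=
  let i : ℕ := min (N e - 1) ⌊x * (N e : ℝ) / ℓ e⌋₊
  (v e (((i : ℝ) + 1) * ℓ e / (N e : ℝ)) - v e ((i : ℝ) * ℓ e / (N e : ℝ)))
    * ((N e : ℝ) / ℓ e)

/-- The two variational equations of the semi-discrete (Galerkin) problem
(Problem 4.2) at a fixed time, for state `(ρ, m)` with time derivatives `(ρt, mt)`: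
for all `q_h ∈ Q_h` and all `v_h ∈ V_h`,
`(∂ₜ ρ_h, q_h)_E = -(∂ₓ m_h, q_h)_E` and
`((1/ρ_h) ∂ₜ m_h - (m_h/(2ρ_h²)) ∂ₜ ρ_h, v_h)_E
   = ( m_h²/(2ρ_h²) + P'(ρ_h) - (a/ρ_h²) ∂ₓ m_h, ∂ₓ v_h )_E
     - ( (m_h/(2ρ_h²)) ∂ₓ m_h + b |m_h| m_h/ρ_h², v_h )_E`,
with `P_e'(ρ) = c_e γ/(γ-1) ρ^(γ-1)` on edge `e`. -/
def SemiDiscEqs {V E : Type} [Fintype V] [Fintype E] [DecidableEq V]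
    (src dst : E → V) (N : E → ℕ) (ℓ : E → ℝ) (γ : ℝ) (a b c : E → ℝ)
    (ρ m ρt mt : E → ℝ → ℝ) : Prop :=
  (∀ q : E → ℝ → ℝ, IsPwConst N ℓ q →
      pairE ℓ ρt q = -pairE ℓ (Dx N ℓ m) q) ∧
  (∀ v : E → ℝ → ℝ, InVh src dst N ℓ v →
      pairE ℓ (fun e x => (1 / ρ e x) * mt e x - m e x / (2 * ρ e x ^ 2) * ρt e x) v
        = pairE ℓ (fun e x => m e x ^ 2 / (2 * ρ e x ^ 2)
              + c e * γ / (γ - 1) * ρ e x ^ (γ - 1)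
              - a e / ρ e x ^ 2 * Dx N ℓ m e x) (Dx N ℓ v)
          - pairE ℓ (fun e x => m e x / (2 * ρ e x ^ 2) * Dx N ℓ m e x
              + b e * |m e x| * m e x / ρ e x ^ 2) v)

/-- A semi-discrete solution of the Galerkin approximation on the time set `S`:
a continuously differentiable map `t ↦ (ρh t, mh t) ∈ Q_h × V_h` (with time
derivatives `ρht`, `mht`) with everywhere positive density, satisfying the
semi-discrete variational equations for every `t ∈ S`. -/
def IsSemiDiscSol {V E : Type} [Fintype V] [Fintype E] [DecidableEq V]
    (src dst : E → V) (N : E → ℕ) (ℓ : E → ℝ) (γ : ℝ) (a b c : E → ℝ)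
    (S : Set ℝ) (ρh mh ρht mht : ℝ → E → ℝ → ℝ) : Prop :=
  (∀ t ∈ S, IsPwConst N ℓ (ρh t) ∧ InVh src dst N ℓ (mh t)) ∧
  (∀ t ∈ S, ∀ e, ∀ x ∈ Set.Icc 0 (ℓ e), 0 < ρh t e x) ∧
  (∀ t ∈ S, ∀ e x,
      HasDerivWithinAt (fun s => ρh s e x) (ρht t e x) S t ∧
      HasDerivWithinAt (fun s => mh s e x) (mht t e x) S t) ∧
  (∀ e x, ContinuousOn (fun t => ρht t e x) S) ∧
  (∀ e x, ContinuousOn (fun t => mht t e x) S) ∧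
  (∀ t ∈ S, SemiDiscEqs src dst N ℓ γ a b c (ρh t) (mh t) (ρht t) (mht t))


open MeasureTheory Set intervalIntegral

section pnHelpers

lemma pn_ae_eq_of_eqOn_Ioo {f g : ℝ → ℝ} {p q : ℝ} (hpq : p ≤ q)
    (h : ∀ x ∈ Set.Ioo p q, f x = g x) :
    ∀ᵐ x ∂(volume.restrict (Set.uIoc p q)), f x = g x := by
  rw [Set.uIoc_of_le hpq, ae_restrict_iff' measurableSet_Ioc]
  have hq : ∀ᵐ (x : ℝ) ∂volume, x ≠ q := by
    rw [MeasureTheory.ae_iff]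
    simpa using (by simp : volume ({q} : Set ℝ) = 0)
  filter_upwards [hq] with x hx hmem
  exact h x ⟨hmem.1, lt_of_le_of_ne hmem.2 hx⟩

lemma pn_integral_congr_Ioo {f g : ℝ → ℝ} {p q : ℝ} (hpq : p ≤ q)
    (h : ∀ x ∈ Set.Ioo p q, f x = g x) :
    ∫ x in p..q, f x = ∫ x in p..q, g x := by
  apply intervalIntegral.integral_congr_ae
  rw [← ae_restrict_iff' measurableSet_uIoc]
  exact pn_ae_eq_of_eqOn_Ioo hpq h

lemma pn_intervalIntegrable_of_eqOn_Ioo {f g : ℝ → ℝ} {p q : ℝ} (hpq : p ≤ q)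
    (h : ∀ x ∈ Set.Ioo p q, f x = g x)
    (hg : ContinuousOn g (Set.Icc p q)) :
    IntervalIntegrable f volume p q := by
  have hgi : IntervalIntegrable g volume p q := by
    apply ContinuousOn.intervalIntegrable
    rwa [Set.uIcc_of_le hpq]
  exact hgi.congr_ae (Filter.EventuallyEq.symm (pn_ae_eq_of_eqOn_Ioo hpq h))

lemma pn_integral_mesh (f : ℝ → ℝ) (L : ℝ) {n : ℕ} (hn : n ≠ 0)
    (hint : ∀ i < n, IntervalIntegrable f volume ((i : ℝ) * L / n) (((i : ℝ) + 1) * L / n)) :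
    ∫ x in (0:ℝ)..L, f x
      = ∑ i ∈ Finset.range n, ∫ x in ((i : ℝ) * L / n)..(((i : ℝ) + 1) * L / n), f x := by
  have key := intervalIntegral.sum_integral_adjacent_intervals
      (a := fun i : ℕ => (i : ℝ) * L / n) (n := n) (μ := volume) (f := f) ?_
  · have h0 : ((0 : ℕ) : ℝ) * L / n = 0 := by simp
    have hL : ((n : ℕ) : ℝ) * L / n = L := by field_simp
    rw [h0, hL] at key
    rw [← key]
    refine Finset.sum_congr rfl fun i _ => ?_
    congr 1
    push_cast
    ring
  · intro k hk
    convert hint k hk using 2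
    push_cast
    ring

lemma pn_edge_eval {n : ℕ} (hn : n ≠ 0) {L : ℝ} (hL : 0 ≤ L) (f : ℝ → ℝ) (g : ℕ → ℝ → ℝ)
    (val : ℕ → ℝ)
    (hfg : ∀ i < n, ∀ x ∈ Set.Ioo ((i:ℝ)*L/n) (((i:ℝ)+1)*L/n), f x = g i x)
    (hg : ∀ i < n, ContinuousOn (g i) (Set.Icc ((i:ℝ)*L/n) (((i:ℝ)+1)*L/n)))
    (hval : ∀ i < n, (∫ x in ((i:ℝ)*L/n)..(((i:ℝ)+1)*L/n), g i x) = val i) :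
    ∫ x in (0:ℝ)..L, f x = ∑ i ∈ Finset.range n, val i := by
  have hn' : (0:ℝ) < (n:ℝ) := by
    exact_mod_cast Nat.pos_of_ne_zero hn
  have hle : ∀ i : ℕ, (i:ℝ)*L/n ≤ ((i:ℝ)+1)*L/n := by
    intro i
    have h1 : (i:ℝ)*L ≤ ((i:ℝ)+1)*L := by nlinarith
    exact (div_le_div_iff_of_pos_right hn').mpr h1
  rw [pn_integral_mesh f L hn
    (fun i hi => pn_intervalIntegrable_of_eqOn_Ioo (hle i) (hfg i hi) (hg i hi))]
  refine Finset.sum_congr rfl fun i hi => ?_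
  have hi' := Finset.mem_range.mp hi
  rw [pn_integral_congr_Ioo (hle i) (hfg i hi'), hval i hi']

lemma pn_Dx_eq {E : Type} (N : E → ℕ) (ℓ : E → ℝ) (v : E → ℝ → ℝ) (e : E)
    (hℓ : 0 < ℓ e) {i : ℕ} (hi : i < N e) {x : ℝ}
    (hx : x ∈ Set.Ico ((i:ℝ)*ℓ e/(N e : ℝ)) (((i:ℝ)+1)*ℓ e/(N e : ℝ))) :
    Dx N ℓ v e x
      = (v e (((i:ℝ)+1)*ℓ e/(N e : ℝ)) - v e ((i:ℝ)*ℓ e/(N e : ℝ))) * ((N e : ℝ)/ℓ e) := by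
  have hn' : (0:ℝ) < (N e : ℝ) := by
    exact_mod_cast Nat.zero_lt_of_lt hi
  have hx0 : 0 ≤ x := le_trans (by positivity) hx.1
  have hfloor : ⌊x * (N e:ℝ) / ℓ e⌋₊ = i := by
    rw [Nat.floor_eq_iff (by positivity)]
    constructor
    · rw [le_div_iff₀ hℓ]
      have h1 := hx.1
      rw [div_le_iff₀ hn'] at h1
      linarith
    · rw [div_lt_iff₀ hℓ]
      have h1 := hx.2
      rw [lt_div_iff₀ hn'] at h1
      push_cast
      linarith
  have hmin : min (N e - 1) ⌊x * (N e:ℝ) / ℓ e⌋₊ = i := by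
    rw [hfloor]
    exact min_eq_right (Nat.le_sub_one_of_lt hi)
  simp only [Dx, hmin]

lemma pn_affine_eq_nodes {v : ℝ → ℝ} {p h : ℝ} (hh : 0 < h) {α β : ℝ}
    (hv : ∀ x ∈ Set.Icc p (p+h), v x = α*x+β) :
    ∀ x ∈ Set.Icc p (p+h), v x = v p + (x - p) * ((v (p+h) - v p)/h) := by
  intro x hx
  rw [hv x hx, hv p ⟨le_refl _, by linarith⟩, hv (p+h) ⟨by linarith, le_refl _⟩]
  field_simp
  ring

lemma pn_integral_quadratic (p h c0 c1 c2 : ℝ) :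
    ∫ x in p..(p+h), (c0 + c1*(x-p) + c2*(x-p)^2)
      = c0*h + c1*h^2/2 + c2*h^3/3 := by
  have H : ∀ x : ℝ, HasDerivAt (fun y => c0*(y-p) + c1*(y-p)^2/2 + c2*(y-p)^3/3)
      (c0 + c1*(x-p) + c2*(x-p)^2) x := by
    intro x
    have h1 : HasDerivAt (fun y : ℝ => y - p) 1 x := (hasDerivAt_id x).sub_const p
    have h2 := h1.pow 2
    have h3 := h1.pow 3
    have h4 := (((h1.const_mul c0)).add ((h2.const_mul c1).div_const 2)).add
      ((h3.const_mul c2).div_const 3)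
    refine h4.congr_deriv ?_
    push_cast
    ring
  rw [intervalIntegral.integral_eq_sub_of_hasDerivAt (fun x _ => H x)
    (Continuous.intervalIntegrable (by continuity) _ _)]
  ring

lemma pn_int_const_val (p h K : ℝ) : (∫ _x in p..(p+h), K) = h*K := by
  simp [mul_comm]

lemma pn_int_affine_sq_K (p h A A' K C : ℝ) (hh : h ≠ 0) :
    ∫ x in p..(p+h), ((A + (x-p)*((A'-A)/h))^2*K + C)
      = h*(A^2+A*A'+A'^2)/3*K + h*C := by
  have e1 : (∫ x in p..(p+h), ((A + (x-p)*((A'-A)/h))^2*K + C))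
      = ∫ x in p..(p+h), ((A^2*K + C) + (2*A*((A'-A)/h)*K)*(x-p)
          + (((A'-A)/h)^2*K)*(x-p)^2) :=
    intervalIntegral.integral_congr (fun x _ => by ring)
  rw [e1, pn_integral_quadratic]
  field_simp
  ring

lemma pn_int_mom_lhs (p h A A' At At' R Rt : ℝ) (hh : h ≠ 0) (hR : R ≠ 0) :
    ∫ x in p..(p+h), (((1/R)*(At + (x-p)*((At'-At)/h))
        - (A + (x-p)*((A'-A)/h))*(Rt/(2*R^2)))*(A + (x-p)*((A'-A)/h)))
      = h*(2*At*A + At*A' + At'*A + 2*At'*A')/6*(1/R)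
        - h*(A^2+A*A'+A'^2)/3*(Rt/(2*R^2)) := by
  have e1 : (∫ x in p..(p+h), (((1/R)*(At + (x-p)*((At'-At)/h))
        - (A + (x-p)*((A'-A)/h))*(Rt/(2*R^2)))*(A + (x-p)*((A'-A)/h))))
      = ∫ x in p..(p+h),
        ((((1/R)*At - A*(Rt/(2*R^2)))*A)
          + ((((1/R)*((At'-At)/h)) - ((A'-A)/h)*(Rt/(2*R^2)))*A
              + ((1/R)*At - A*(Rt/(2*R^2)))*((A'-A)/h))*(x-p)
          + ((((1/R)*((At'-At)/h)) - ((A'-A)/h)*(Rt/(2*R^2)))*((A'-A)/h))*(x-p)^2) :=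
    intervalIntegral.integral_congr (fun x _ => by ring)
  rw [e1, pn_integral_quadratic]
  field_simp [hh, hR]
  ring

lemma pn_cont_abs_cube (p s A : ℝ) : Continuous (fun x : ℝ => |A + (x-p)*s|^3) := by
  fun_prop

lemma pn_int_affine_sq_abs (p h A A' K Kb : ℝ) (hh : h ≠ 0) :
    ∫ x in p..(p+h), ((A + (x-p)*((A'-A)/h))^2*K + Kb*|A + (x-p)*((A'-A)/h)|^3)
      = h*(A^2+A*A'+A'^2)/3*K
        + Kb*(∫ x in p..(p+h), |A + (x-p)*((A'-A)/h)|^3) := by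
  rw [intervalIntegral.integral_add (g := fun x => Kb*|A + (x-p)*((A'-A)/h)|^3)
      (Continuous.intervalIntegrable (by continuity) _ _)
      (Continuous.intervalIntegrable ((continuous_const.mul (pn_cont_abs_cube p ((A'-A)/h) A))) _ _),
    intervalIntegral.integral_const_mul]
  congr 1
  have h1 := pn_int_affine_sq_K p h A A' K 0 hh
  simpa using h1

lemma pn_int_const_abs (p h K Kb A A' : ℝ) :
    ∫ x in p..(p+h), (K + Kb*|A + (x-p)*((A'-A)/h)|^3)
      = h*K + Kb*(∫ x in p..(p+h), |A + (x-p)*((A'-A)/h)|^3) := by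
  rw [intervalIntegral.integral_add (g := fun x => Kb*|A + (x-p)*((A'-A)/h)|^3)
      (Continuous.intervalIntegrable (by continuity) _ _)
      (Continuous.intervalIntegrable ((continuous_const.mul (pn_cont_abs_cube p ((A'-A)/h) A))) _ _),
    intervalIntegral.integral_const_mul, pn_int_const_val]

lemma pn_abs_cube (y : ℝ) : |y| * y * y = |y|^3 := by
  rcases abs_cases y with ⟨h, _⟩ | ⟨h, _⟩ <;> rw [h] <;> ring

lemma pn_sum_vtxSum {V E : Type} [Fintype V] [Fintype E] [DecidableEq V]
    (src dst : E → V) (ℓ : E → ℝ) (f : E → ℝ → ℝ) :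
    ∑ w : V, vtxSum src dst ℓ f w = ∑ e, (f e (ℓ e) - f e 0) := by
  simp only [vtxSum]
  rw [Finset.sum_comm]
  refine Finset.sum_congr rfl fun e _ => ?_
  rw [Finset.sum_sub_distrib]
  simp [Finset.sum_ite_eq]

end pnHelpers

set_option maxHeartbeats 1000000 in
/-- **Conservation of mass and uniform energy bounds for the semi-discretization
(Lemma 4.4).**  Let `(ρh, mh)` be a semi-discrete solution on `[0,T]` with initial data
`(ρh 0, mh 0)`.  Then for every `t ∈ [0,T]`:
`Σ_e ∫_0^{ℓ_e} ρ_h(t) dx = Σ_e ∫_0^{ℓ_e} ρ_h(0) dx`, and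
`Σ_e ∫_0^{ℓ_e} ( m_h(t)²/(2ρ_h(t)) + P(ρ_h(t)) ) dx
   + ∫_0^t Σ_e ∫_0^{ℓ_e} ( a_e |∂ₓ m_h(s)|²/ρ_h(s)² + b_e |m_h(s)|³/ρ_h(s)² ) dx ds
 = Σ_e ∫_0^{ℓ_e} ( m_h(0)²/(2ρ_h(0)) + P(ρ_h(0)) ) dx`,
with `P_e(ρ) = c_e ρ^γ/(γ-1)` on edge `e`. -/
theorem semidiscrete_conservation_of_mass_and_energy
    {V E : Type} [Fintype V] [Fintype E] [DecidableEq V]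
    (src dst : E → V) (N : E → ℕ) (hN : ∀ e, 1 ≤ N e)
    (ℓ : E → ℝ) (hℓ : ∀ e, 0 < ℓ e)
    (γ : ℝ) (hγ : 1 < γ) (a b c : E → ℝ)
    (ha : ∀ e, 0 ≤ a e) (hb : ∀ e, 0 ≤ b e) (hc : ∀ e, 0 < c e)
    (T : ℝ) (hT : 0 ≤ T)
    (ρh mh ρht mht : ℝ → E → ℝ → ℝ)
    (hsol : IsSemiDiscSol src dst N ℓ γ a b c (Set.Icc 0 T) ρh mh ρht mht)
    (t : ℝ) (ht : t ∈ Set.Icc 0 T) :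
    ((∑ e, ∫ x in (0 : ℝ)..(ℓ e), ρh t e x)
        = ∑ e, ∫ x in (0 : ℝ)..(ℓ e), ρh 0 e x) ∧
    ((∑ e, ∫ x in (0 : ℝ)..(ℓ e),
        (mh t e x ^ 2 / (2 * ρh t e x) + c e * ρh t e x ^ γ / (γ - 1)))
      + (∫ s in (0 : ℝ)..t, ∑ e, ∫ x in (0 : ℝ)..(ℓ e),
          (a e * Dx N ℓ (mh s) e x ^ 2 / ρh s e x ^ 2
            + b e * |mh s e x| ^ 3 / ρh s e x ^ 2))
      = ∑ e, ∫ x in (0 : ℝ)..(ℓ e),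
          (mh 0 e x ^ 2 / (2 * ρh 0 e x) + c e * ρh 0 e x ^ γ / (γ - 1))) := by
  classical
  obtain ⟨hsp, hpos, hder, hcont1, hcont2, heqs⟩ := hsol
  by_cases ht0 : t = 0
  · subst ht0
    exact ⟨rfl, by simp⟩
  have htpos : 0 < t := lt_of_le_of_ne ht.1 (Ne.symm ht0)
  have hT0 : 0 < T := lt_of_lt_of_le htpos ht.2
  have hUD : UniqueDiffOn ℝ (Set.Icc (0:ℝ) T) := uniqueDiffOn_Icc hT0
  have h0S : (0:ℝ) ∈ Set.Icc (0:ℝ) T := ⟨le_refl 0, hT⟩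
  have hγ1 : γ - 1 ≠ 0 := sub_ne_zero.mpr (ne_of_gt hγ)
  have hNpos : ∀ e : E, (0:ℝ) < (N e : ℝ) := fun e => by exact_mod_cast hN e
  have hne : ∀ e : E, (N e : ℝ) ≠ 0 := fun e => (hNpos e).ne'
  have hh : ∀ e : E, 0 < ℓ e / (N e : ℝ) := fun e => div_pos (hℓ e) (hNpos e)
  have hpe' : ∀ (e : E) (i : ℕ), (((i : ℝ) + 1) * ℓ e / (N e : ℝ)) = ((i : ℝ) * ℓ e / (N e : ℝ)) + (ℓ e / (N e : ℝ)) := fun e i => by ring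
  have hHmul : ∀ (e : E) (X : ℝ), (ℓ e / (N e : ℝ)) * (X * ((N e : ℝ) / ℓ e)) = X := by
    intro e X
    have h1 : (N e : ℝ) ≠ 0 := hne e
    have h2 : ℓ e ≠ 0 := (hℓ e).ne'
    field_simp
    try ring
  have hnodemem : ∀ (e : E), ∀ i : ℕ, i < N e → ((i : ℝ) * ℓ e / (N e : ℝ)) ∈ Set.Icc 0 (ℓ e) := by
    intro e i hi
    constructor
    · exact div_nonneg (mul_nonneg (Nat.cast_nonneg i) (hℓ e).le) (Nat.cast_nonneg _)
    · rw [div_le_iff₀ (hNpos e)]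
      have h1 : (i:ℝ) ≤ (N e : ℝ) := by exact_mod_cast hi.le
      nlinarith [hℓ e]
  have hR : ∀ τ ∈ Set.Icc (0:ℝ) T, ∀ (e : E), ∀ i : ℕ, i < N e → 0 < ρh τ e ((i : ℝ) * ℓ e / (N e : ℝ)) :=
    fun τ hτ e i hi => hpos τ hτ e _ (hnodemem e i hi)
  have hrepρ : ∀ τ ∈ Set.Icc (0:ℝ) T, ∀ (e : E), ∀ i : ℕ, i < N e →
      ∀ x ∈ Set.Ico ((i : ℝ) * ℓ e / (N e : ℝ)) (((i : ℝ) + 1) * ℓ e / (N e : ℝ)), ρh τ e x = ρh τ e ((i : ℝ) * ℓ e / (N e : ℝ)) :=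
    fun τ hτ e i hi => (hsp τ hτ).1 e i hi
  have hrepm : ∀ τ ∈ Set.Icc (0:ℝ) T, ∀ (e : E), ∀ i : ℕ, i < N e →
      ∀ x ∈ Set.Icc ((i : ℝ) * ℓ e / (N e : ℝ)) (((i : ℝ) + 1) * ℓ e / (N e : ℝ)), mh τ e x = mh τ e ((i : ℝ) * ℓ e / (N e : ℝ)) + (x - ((i : ℝ) * ℓ e / (N e : ℝ))) * ((mh τ e (((i : ℝ) + 1) * ℓ e / (N e : ℝ)) - mh τ e ((i : ℝ) * ℓ e / (N e : ℝ))) / (ℓ e / (N e : ℝ))) := by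
    intro τ hτ e i hi x hx
    obtain ⟨α, β, hαβ⟩ := ((hsp τ hτ).2).1.2 e i hi
    rw [hpe' e i] at hx ⊢
    exact pn_affine_eq_nodes (hh e) (fun y hy => hαβ y (by rw [hpe' e i]; exact hy)) x hx
  have hDxm : ∀ (τ : ℝ) (e : E), ∀ i : ℕ, i < N e →
      ∀ x ∈ Set.Ico ((i : ℝ) * ℓ e / (N e : ℝ)) (((i : ℝ) + 1) * ℓ e / (N e : ℝ)),
        Dx N ℓ (mh τ) e x = ((mh τ e (((i : ℝ) + 1) * ℓ e / (N e : ℝ)) - mh τ e ((i : ℝ) * ℓ e / (N e : ℝ))) * ((N e : ℝ) / ℓ e)) :=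
    fun τ e i hi x hx => pn_Dx_eq N ℓ (mh τ) e (hℓ e) hi hx
  have hrepρt : ∀ τ ∈ Set.Icc (0:ℝ) T, ∀ (e : E), ∀ i : ℕ, i < N e →
      ∀ x ∈ Set.Ico ((i : ℝ) * ℓ e / (N e : ℝ)) (((i : ℝ) + 1) * ℓ e / (N e : ℝ)), ρht τ e x = ρht τ e ((i : ℝ) * ℓ e / (N e : ℝ)) := by
    intro τ hτ e i hi x hx
    have h2 := (hder τ hτ e ((i : ℝ) * ℓ e / (N e : ℝ))).1
    have h1' : HasDerivWithinAt (fun s => ρh s e ((i : ℝ) * ℓ e / (N e : ℝ))) (ρht τ e x) (Set.Icc (0:ℝ) T) τ :=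
      (hder τ hτ e x).1.congr (fun s hs => ((hsp s hs).1 e i hi x hx).symm)
        (((hsp τ hτ).1 e i hi x hx).symm)
    exact (h1'.derivWithin (hUD τ hτ)).symm.trans (h2.derivWithin (hUD τ hτ))
  have hrepmt : ∀ τ ∈ Set.Icc (0:ℝ) T, ∀ (e : E), ∀ i : ℕ, i < N e →
      ∀ x ∈ Set.Icc ((i : ℝ) * ℓ e / (N e : ℝ)) (((i : ℝ) + 1) * ℓ e / (N e : ℝ)), mht τ e x = mht τ e ((i : ℝ) * ℓ e / (N e : ℝ)) + (x - ((i : ℝ) * ℓ e / (N e : ℝ))) * ((mht τ e (((i : ℝ) + 1) * ℓ e / (N e : ℝ)) - mht τ e ((i : ℝ) * ℓ e / (N e : ℝ))) / (ℓ e / (N e : ℝ))) := by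
    intro τ hτ e i hi x hx
    have hg : HasDerivWithinAt
        (fun s => mh s e ((i : ℝ) * ℓ e / (N e : ℝ)) + (x - ((i : ℝ) * ℓ e / (N e : ℝ))) * ((mh s e (((i : ℝ) + 1) * ℓ e / (N e : ℝ)) - mh s e ((i : ℝ) * ℓ e / (N e : ℝ))) / (ℓ e / (N e : ℝ))))
        (mht τ e ((i : ℝ) * ℓ e / (N e : ℝ)) + (x - ((i : ℝ) * ℓ e / (N e : ℝ))) * ((mht τ e (((i : ℝ) + 1) * ℓ e / (N e : ℝ)) - mht τ e ((i : ℝ) * ℓ e / (N e : ℝ))) / (ℓ e / (N e : ℝ)))) (Set.Icc (0:ℝ) T) τ :=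
      ((hder τ hτ e ((i : ℝ) * ℓ e / (N e : ℝ))).2).add
        (((((hder τ hτ e (((i : ℝ) + 1) * ℓ e / (N e : ℝ))).2).sub ((hder τ hτ e ((i : ℝ) * ℓ e / (N e : ℝ))).2)).div_const _).const_mul _)
    have hf := (hder τ hτ e x).2
    have hg' : HasDerivWithinAt (fun s => mh s e x) (mht τ e ((i : ℝ) * ℓ e / (N e : ℝ)) + (x - ((i : ℝ) * ℓ e / (N e : ℝ))) * ((mht τ e (((i : ℝ) + 1) * ℓ e / (N e : ℝ)) - mht τ e ((i : ℝ) * ℓ e / (N e : ℝ))) / (ℓ e / (N e : ℝ)))) (Set.Icc (0:ℝ) T) τ :=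
      hg.congr (fun s hs => hrepm s hs e i hi x hx) (hrepm τ hτ e i hi x hx)
    exact (hf.derivWithin (hUD τ hτ)).symm.trans (hg'.derivWithin (hUD τ hτ))
  have evalMass : ∀ τ ∈ Set.Icc (0:ℝ) T, (∑ e : E, ∫ x in (0:ℝ)..(ℓ e), ρh τ e x)
      = ∑ e : E, ∑ i ∈ Finset.range (N e), ((ℓ e / (N e : ℝ)) * ρh τ e ((i : ℝ) * ℓ e / (N e : ℝ))) := by
    intro τ hτ
    try simp only [pairE]
    refine Finset.sum_congr rfl fun e _ => ?_
    refine pn_edge_eval (Nat.one_le_iff_ne_zero.mp (hN e)) (hℓ e).le _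
      (fun i x => ρh τ e ((i : ℝ) * ℓ e / (N e : ℝ))) _ ?_ ?_ ?_
    · intro i hi x hx
      beta_reduce
      rw [hrepρ τ hτ e i hi x ⟨hx.1.le, hx.2⟩]
    · intro i hi
      exact Continuous.continuousOn (by fun_prop)
    · intro i hi
      beta_reduce
      rw [hpe' e i, pn_int_const_val]
  have evalRt1 : ∀ τ ∈ Set.Icc (0:ℝ) T, pairE ℓ (ρht τ) (fun _ _ => (1:ℝ))
      = ∑ e : E, ∑ i ∈ Finset.range (N e), ((ℓ e / (N e : ℝ)) * ρht τ e ((i : ℝ) * ℓ e / (N e : ℝ))) := by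
    intro τ hτ
    try simp only [pairE]
    refine Finset.sum_congr rfl fun e _ => ?_
    refine pn_edge_eval (Nat.one_le_iff_ne_zero.mp (hN e)) (hℓ e).le _
      (fun i x => ρht τ e ((i : ℝ) * ℓ e / (N e : ℝ))) _ ?_ ?_ ?_
    · intro i hi x hx
      beta_reduce
      rw [hrepρt τ hτ e i hi x ⟨hx.1.le, hx.2⟩]
      ring
    · intro i hi
      exact Continuous.continuousOn (by fun_prop)
    · intro i hi
      beta_reduce
      rw [hpe' e i, pn_int_const_val]
  have evalDx1 : ∀ τ ∈ Set.Icc (0:ℝ) T, pairE ℓ (Dx N ℓ (mh τ)) (fun _ _ => (1:ℝ))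
      = ∑ e : E, ∑ i ∈ Finset.range (N e), ((mh τ e (((i : ℝ) + 1) * ℓ e / (N e : ℝ)) - mh τ e ((i : ℝ) * ℓ e / (N e : ℝ)))) := by
    intro τ hτ
    try simp only [pairE]
    refine Finset.sum_congr rfl fun e _ => ?_
    refine pn_edge_eval (Nat.one_le_iff_ne_zero.mp (hN e)) (hℓ e).le _
      (fun i x => ((mh τ e (((i : ℝ) + 1) * ℓ e / (N e : ℝ)) - mh τ e ((i : ℝ) * ℓ e / (N e : ℝ))) * ((N e : ℝ) / ℓ e))) _ ?_ ?_ ?_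
    · intro i hi x hx
      beta_reduce
      rw [hDxm τ e i hi x ⟨hx.1.le, hx.2⟩]
      ring
    · intro i hi
      exact Continuous.continuousOn (by fun_prop)
    · intro i hi
      beta_reduce
      rw [hpe' e i, pn_int_const_val]
      exact hHmul e _
  have evalE : ∀ τ ∈ Set.Icc (0:ℝ) T, (∑ e : E, ∫ x in (0:ℝ)..(ℓ e), (mh τ e x ^ 2 / (2 * ρh τ e x) + c e * ρh τ e x ^ γ / (γ - 1)))
      = ∑ e : E, ∑ i ∈ Finset.range (N e), ((ℓ e / (N e : ℝ)) * (mh τ e ((i : ℝ) * ℓ e / (N e : ℝ)) ^ 2 + mh τ e ((i : ℝ) * ℓ e / (N e : ℝ)) * mh τ e (((i : ℝ) + 1) * ℓ e / (N e : ℝ)) + mh τ e (((i : ℝ) + 1) * ℓ e / (N e : ℝ)) ^ 2) / 3 * (2 * ρh τ e ((i : ℝ) * ℓ e / (N e : ℝ)))⁻¹ + (ℓ e / (N e : ℝ)) * (c e * ρh τ e ((i : ℝ) * ℓ e / (N e : ℝ)) ^ γ / (γ - 1))) := by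
    intro τ hτ
    try simp only [pairE]
    refine Finset.sum_congr rfl fun e _ => ?_
    refine pn_edge_eval (Nat.one_le_iff_ne_zero.mp (hN e)) (hℓ e).le _
      (fun i x => (mh τ e ((i : ℝ) * ℓ e / (N e : ℝ)) + (x - ((i : ℝ) * ℓ e / (N e : ℝ))) * ((mh τ e (((i : ℝ) + 1) * ℓ e / (N e : ℝ)) - mh τ e ((i : ℝ) * ℓ e / (N e : ℝ))) / (ℓ e / (N e : ℝ)))) ^ 2 * (2 * ρh τ e ((i : ℝ) * ℓ e / (N e : ℝ)))⁻¹ + (c e * ρh τ e ((i : ℝ) * ℓ e / (N e : ℝ)) ^ γ / (γ - 1))) _ ?_ ?_ ?_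
    · intro i hi x hx
      beta_reduce
      rw [hrepρ τ hτ e i hi x ⟨hx.1.le, hx.2⟩, hrepm τ hτ e i hi x ⟨hx.1.le, hx.2.le⟩]
      ring
    · intro i hi
      exact Continuous.continuousOn (by fun_prop)
    · intro i hi
      beta_reduce
      rw [hpe' e i]
      exact pn_int_affine_sq_K _ _ _ _ _ _ (hh e).ne'
  have evalLHS : ∀ τ ∈ Set.Icc (0:ℝ) T, pairE ℓ (fun e x => (1 / ρh τ e x) * mht τ e x - mh τ e x / (2 * ρh τ e x ^ 2) * ρht τ e x) (mh τ)
      = ∑ e : E, ∑ i ∈ Finset.range (N e), ((ℓ e / (N e : ℝ)) * (2 * mht τ e ((i : ℝ) * ℓ e / (N e : ℝ)) * mh τ e ((i : ℝ) * ℓ e / (N e : ℝ)) + mht τ e ((i : ℝ) * ℓ e / (N e : ℝ)) * mh τ e (((i : ℝ) + 1) * ℓ e / (N e : ℝ)) + mht τ e (((i : ℝ) + 1) * ℓ e / (N e : ℝ)) * mh τ e ((i : ℝ) * ℓ e / (N e : ℝ)) + 2 * mht τ e (((i : ℝ) + 1) * ℓ e / (N e : ℝ)) * mh τ e (((i : ℝ)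 + 1) * ℓ e / (N e : ℝ))) / 6 * (1 / ρh τ e ((i : ℝ) * ℓ e / (N e : ℝ))) - (ℓ e / (N e : ℝ)) * (mh τ e ((i : ℝ) * ℓ e / (N e : ℝ)) ^ 2 + mh τ e ((i : ℝ) * ℓ e / (N e : ℝ)) * mh τ e (((i : ℝ) + 1) * ℓ e / (N e : ℝ)) + mh τ e (((i : ℝ) + 1) * ℓ e / (N e : ℝ)) ^ 2) / 3 * (ρht τ e ((i : ℝ) * ℓ e / (N e : ℝ)) / (2 * ρh τ e ((i : ℝ) * ℓ e / (N e : ℝ)) ^ 2))) := by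
    intro τ hτ
    try simp only [pairE]
    refine Finset.sum_congr rfl fun e _ => ?_
    refine pn_edge_eval (Nat.one_le_iff_ne_zero.mp (hN e)) (hℓ e).le _
      (fun i x => ((1 / ρh τ e ((i : ℝ) * ℓ e / (N e : ℝ))) * (mht τ e ((i : ℝ) * ℓ e / (N e : ℝ)) + (x - ((i : ℝ) * ℓ e / (N e : ℝ))) * ((mht τ e (((i : ℝ) + 1) * ℓ e / (N e : ℝ)) - mht τ e ((i : ℝ) * ℓ e / (N e : ℝ))) / (ℓ e / (N e : ℝ)))) - (mh τ e ((i : ℝ) * ℓ e / (N e : ℝ)) + (x - ((i : ℝ) * ℓ e / (N e : ℝ))) * ((mh τ e (((i : ℝ) + 1) * ℓ e / (N e : ℝ)) - mh τ e ((i : ℝ) * ℓ e / (N e : ℝ))) / (ℓ e / (N e : ℝ)))) * (ρht τ e ((i : ℝ) * ℓ e / (N e : ℝ)) / (2 * ρh τ e ((i : ℝ) * ℓ e / (N e : ℝ)) ^ 2))) * (mh τ e ((i : ℝ) * ℓ e / (N e : ℝ)) + (x - ((i : ℝ) * ℓ e / (N e : ℝ))) * ((mh τ e (((i : ℝ) +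 1) * ℓ e / (N e : ℝ)) - mh τ e ((i : ℝ) * ℓ e / (N e : ℝ))) / (ℓ e / (N e : ℝ))))) _ ?_ ?_ ?_
    · intro i hi x hx
      beta_reduce
      rw [hrepρ τ hτ e i hi x ⟨hx.1.le, hx.2⟩, hrepm τ hτ e i hi x ⟨hx.1.le, hx.2.le⟩,
        hrepρt τ hτ e i hi x ⟨hx.1.le, hx.2⟩, hrepmt τ hτ e i hi x ⟨hx.1.le, hx.2.le⟩]
      ring
    · intro i hi
      exact Continuous.continuousOn (by fun_prop)
    · intro i hi
      beta_reduce
      rw [hpe' e i]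
      exact pn_int_mom_lhs _ _ _ _ _ _ _ _ (hh e).ne' (hR τ hτ e i hi).ne'
  have evalRtP : ∀ τ ∈ Set.Icc (0:ℝ) T, pairE ℓ (ρht τ) (fun e x => c e * γ / (γ - 1) * ρh τ e x ^ (γ - 1))
      = ∑ e : E, ∑ i ∈ Finset.range (N e), ((ℓ e / (N e : ℝ)) * (ρht τ e ((i : ℝ) * ℓ e / (N e : ℝ)) * (c e * γ / (γ - 1) * ρh τ e ((i : ℝ) * ℓ e / (N e : ℝ)) ^ (γ - 1)))) := by
    intro τ hτ
    try simp only [pairE]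
    refine Finset.sum_congr rfl fun e _ => ?_
    refine pn_edge_eval (Nat.one_le_iff_ne_zero.mp (hN e)) (hℓ e).le _
      (fun i x => ρht τ e ((i : ℝ) * ℓ e / (N e : ℝ)) * (c e * γ / (γ - 1) * ρh τ e ((i : ℝ) * ℓ e / (N e : ℝ)) ^ (γ - 1))) _ ?_ ?_ ?_
    · intro i hi x hx
      beta_reduce
      rw [hrepρ τ hτ e i hi x ⟨hx.1.le, hx.2⟩, hrepρt τ hτ e i hi x ⟨hx.1.le, hx.2⟩]
    · intro i hi
      exact Continuous.continuousOn (by fun_prop)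
    · intro i hi
      beta_reduce
      rw [hpe' e i, pn_int_const_val]
  have evalDxP : ∀ τ ∈ Set.Icc (0:ℝ) T, pairE ℓ (Dx N ℓ (mh τ)) (fun e x => c e * γ / (γ - 1) * ρh τ e x ^ (γ - 1))
      = ∑ e : E, ∑ i ∈ Finset.range (N e), ((ℓ e / (N e : ℝ)) * (((mh τ e (((i : ℝ) + 1) * ℓ e / (N e : ℝ)) - mh τ e ((i : ℝ) * ℓ e / (N e : ℝ))) * ((N e : ℝ) / ℓ e)) * (c e * γ / (γ - 1) * ρh τ e ((i : ℝ) * ℓ e / (N e : ℝ)) ^ (γ - 1)))) := by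
    intro τ hτ
    try simp only [pairE]
    refine Finset.sum_congr rfl fun e _ => ?_
    refine pn_edge_eval (Nat.one_le_iff_ne_zero.mp (hN e)) (hℓ e).le _
      (fun i x => ((mh τ e (((i : ℝ) + 1) * ℓ e / (N e : ℝ)) - mh τ e ((i : ℝ) * ℓ e / (N e : ℝ))) * ((N e : ℝ) / ℓ e)) * (c e * γ / (γ - 1) * ρh τ e ((i : ℝ) * ℓ e / (N e : ℝ)) ^ (γ - 1))) _ ?_ ?_ ?_
    · intro i hi x hx
      beta_reduce
      rw [hrepρ τ hτ e i hi x ⟨hx.1.le, hx.2⟩, hDxm τ e i hi x ⟨hx.1.le, hx.2⟩]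
    · intro i hi
      exact Continuous.continuousOn (by fun_prop)
    · intro i hi
      beta_reduce
      rw [hpe' e i, pn_int_const_val]
  have evalRHS1 : ∀ τ ∈ Set.Icc (0:ℝ) T, pairE ℓ (fun e x => mh τ e x ^ 2 / (2 * ρh τ e x ^ 2) + c e * γ / (γ - 1) * ρh τ e x ^ (γ - 1) - a e / ρh τ e x ^ 2 * Dx N ℓ (mh τ) e x) (Dx N ℓ (mh τ))
      = ∑ e : E, ∑ i ∈ Finset.range (N e), ((ℓ e / (N e : ℝ)) * (mh τ e ((i : ℝ) * ℓ e / (N e : ℝ)) ^ 2 + mh τ e ((i : ℝ) * ℓ e / (N e : ℝ)) * mh τ e (((i : ℝ) + 1) * ℓ e / (N e : ℝ)) + mh τ e (((i : ℝ) + 1) * ℓ e / (N e : ℝ)) ^ 2) / 3 * ((2 * ρh τ e ((i : ℝ) * ℓ e / (N e : ℝ)) ^ 2)⁻¹ * ((mh τ e (((i : ℝ) + 1) * ℓ e / (N e : ℝ)) - mh τ e ((i : ℝ) * ℓ e / (N e : ℝ))) * ((N e : ℝ) / ℓ e))) + (ℓ e / (N e : ℝ)) * (((c e * γ / (γ - 1)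 * ρh τ e ((i : ℝ) * ℓ e / (N e : ℝ)) ^ (γ - 1)) - a e / ρh τ e ((i : ℝ) * ℓ e / (N e : ℝ)) ^ 2 * ((mh τ e (((i : ℝ) + 1) * ℓ e / (N e : ℝ)) - mh τ e ((i : ℝ) * ℓ e / (N e : ℝ))) * ((N e : ℝ) / ℓ e))) * ((mh τ e (((i : ℝ) + 1) * ℓ e / (N e : ℝ)) - mh τ e ((i : ℝ) * ℓ e / (N e : ℝ))) * ((N e : ℝ) / ℓ e)))) := by
    intro τ hτ
    try simp only [pairE]
    refine Finset.sum_congr rfl fun e _ => ?_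
    refine pn_edge_eval (Nat.one_le_iff_ne_zero.mp (hN e)) (hℓ e).le _
      (fun i x => (mh τ e ((i : ℝ) * ℓ e / (N e : ℝ)) + (x - ((i : ℝ) * ℓ e / (N e : ℝ))) * ((mh τ e (((i : ℝ) + 1) * ℓ e / (N e : ℝ)) - mh τ e ((i : ℝ) * ℓ e / (N e : ℝ))) / (ℓ e / (N e : ℝ)))) ^ 2 * ((2 * ρh τ e ((i : ℝ) * ℓ e / (N e : ℝ)) ^ 2)⁻¹ * ((mh τ e (((i : ℝ) + 1) * ℓ e / (N e : ℝ)) - mh τ e ((i : ℝ) * ℓ e / (N e : ℝ))) * ((N e : ℝ) / ℓ e))) + (((c e * γ / (γ - 1) * ρh τ e ((i : ℝ) * ℓ e / (N e : ℝ)) ^ (γ - 1)) - a e / ρh τ e ((i : ℝ) * ℓ e / (N e : ℝ)) ^ 2 * ((mh τ e (((i : ℝ) + 1) * ℓ e / (N e : ℝ)) - mh τ e ((i : ℝ) * ℓ e / (N e : ℝ))) * ((N e : ℝ) / ℓ e))) * ((mh τ e (((i : ℝ) + 1) * ℓ e / (N e : ℝ)) - mh τ e ((i : ℝ) * ℓ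 e / (N e : ℝ))) * ((N e : ℝ) / ℓ e)))) _ ?_ ?_ ?_
    · intro i hi x hx
      beta_reduce
      rw [hrepρ τ hτ e i hi x ⟨hx.1.le, hx.2⟩, hrepm τ hτ e i hi x ⟨hx.1.le, hx.2.le⟩,
        hDxm τ e i hi x ⟨hx.1.le, hx.2⟩]
      ring
    · intro i hi
      exact Continuous.continuousOn (by fun_prop)
    · intro i hi
      beta_reduce
      rw [hpe' e i]
      exact pn_int_affine_sq_K _ _ _ _ _ _ (hh e).ne'
  have evalRHS2 : ∀ τ ∈ Set.Icc (0:ℝ) T, pairE ℓ (fun e x => mh τ e x / (2 * ρh τ e x ^ 2) * Dx N ℓ (mh τ) e x + b e * |mh τ e x| * mh τ e x / ρh τ e x ^ 2) (mh τ)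
      = ∑ e : E, ∑ i ∈ Finset.range (N e), ((ℓ e / (N e : ℝ)) * (mh τ e ((i : ℝ) * ℓ e / (N e : ℝ)) ^ 2 + mh τ e ((i : ℝ) * ℓ e / (N e : ℝ)) * mh τ e (((i : ℝ) + 1) * ℓ e / (N e : ℝ)) + mh τ e (((i : ℝ) + 1) * ℓ e / (N e : ℝ)) ^ 2) / 3 * (((mh τ e (((i : ℝ) + 1) * ℓ e / (N e : ℝ)) - mh τ e ((i : ℝ) * ℓ e / (N e : ℝ))) * ((N e : ℝ) / ℓ e)) * (2 * ρh τ e ((i : ℝ) * ℓ e / (N e : ℝ)) ^ 2)⁻¹) + (b e * (1 / ρh τ e ((i : ℝ) * ℓ e / (N e : ℝ)) ^ 2)) * (∫ x in ((i : ℝ) * ℓ e / (N e : ℝ))..(((i : ℝ) + 1) * ℓ e / (N e : ℝ)), |mh τ e ((i : ℝ) * ℓ e / (N e : ℝ)) + (x - ((i : ℝ) * ℓ e / (N e : ℝ))) * ((mh τ e (((i : ℝ) + 1) * ℓ e / (N e : ℝ)) - mh τ e ((i : ℝ) * ℓ e / (N e : ℝ))) / (ℓ e / (N e : ℝ)))|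 ^ 3)) := by
    intro τ hτ
    try simp only [pairE]
    refine Finset.sum_congr rfl fun e _ => ?_
    refine pn_edge_eval (Nat.one_le_iff_ne_zero.mp (hN e)) (hℓ e).le _
      (fun i x => (mh τ e ((i : ℝ) * ℓ e / (N e : ℝ)) + (x - ((i : ℝ) * ℓ e / (N e : ℝ))) * ((mh τ e (((i : ℝ) + 1) * ℓ e / (N e : ℝ)) - mh τ e ((i : ℝ) * ℓ e / (N e : ℝ))) / (ℓ e / (N e : ℝ)))) ^ 2 * (((mh τ e (((i : ℝ) + 1) * ℓ e / (N e : ℝ)) - mh τ e ((i : ℝ) * ℓ e / (N e : ℝ))) * ((N e : ℝ) / ℓ e)) * (2 * ρh τ e ((i : ℝ) * ℓ e / (N e : ℝ)) ^ 2)⁻¹) + (b e * (1 / ρh τ e ((i : ℝ) * ℓ e / (N e : ℝ)) ^ 2)) * |mh τ e ((i : ℝ) * ℓ e / (N e : ℝ)) + (x - ((i : ℝ) * ℓ e / (N e : ℝ))) * ((mh τ e (((i : ℝ) + 1) * ℓ e / (N e : ℝ)) - mh τ e ((i : ℝ) * ℓ e / (N e : ℝ))) / (ℓ e / (N e : ℝ)))|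 ^ 3) _ ?_ ?_ ?_
    · intro i hi x hx
      beta_reduce
      rw [hrepρ τ hτ e i hi x ⟨hx.1.le, hx.2⟩, hrepm τ hτ e i hi x ⟨hx.1.le, hx.2.le⟩,
        hDxm τ e i hi x ⟨hx.1.le, hx.2⟩]
      linear_combination (b e / ρh τ e ((i : ℝ) * ℓ e / (N e : ℝ)) ^ 2) * pn_abs_cube (mh τ e ((i : ℝ) * ℓ e / (N e : ℝ)) + (x - ((i : ℝ) * ℓ e / (N e : ℝ))) * ((mh τ e (((i : ℝ) + 1) * ℓ e / (N e : ℝ)) - mh τ e ((i : ℝ) * ℓ e / (N e : ℝ))) / (ℓ e / (N e : ℝ))))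
    · intro i hi
      exact Continuous.continuousOn (by fun_prop)
    · intro i hi
      beta_reduce
      rw [hpe' e i]
      exact pn_int_affine_sq_abs _ _ _ _ _ _ (hh e).ne'
  have evalD : ∀ τ ∈ Set.Icc (0:ℝ) T, (∑ e : E, ∫ x in (0:ℝ)..(ℓ e), (a e * Dx N ℓ (mh τ) e x ^ 2 / ρh τ e x ^ 2 + b e * |mh τ e x| ^ 3 / ρh τ e x ^ 2))
      = ∑ e : E, ∑ i ∈ Finset.range (N e), ((ℓ e / (N e : ℝ)) * (a e * ((mh τ e (((i : ℝ) + 1) * ℓ e / (N e : ℝ)) - mh τ e ((i : ℝ) * ℓ e / (N e : ℝ))) * ((N e : ℝ) / ℓ e)) ^ 2 * (1 / ρh τ e ((i : ℝ) * ℓ e / (N e : ℝ)) ^ 2)) + (b e * (1 / ρh τ e ((i : ℝ) * ℓ e / (N e : ℝ)) ^ 2)) * (∫ x in ((i : ℝ) * ℓ e / (N e : ℝ))..(((i : ℝ) + 1) * ℓ e / (N e : ℝ)), |mh τ e ((i : ℝ) * ℓ e / (N e : ℝ)) + (x - ((i : ℝ) * ℓ e / (N e : ℝ))) * ((mh τ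 e (((i : ℝ) + 1) * ℓ e / (N e : ℝ)) - mh τ e ((i : ℝ) * ℓ e / (N e : ℝ))) / (ℓ e / (N e : ℝ)))| ^ 3)) := by
    intro τ hτ
    try simp only [pairE]
    refine Finset.sum_congr rfl fun e _ => ?_
    refine pn_edge_eval (Nat.one_le_iff_ne_zero.mp (hN e)) (hℓ e).le _
      (fun i x => (a e * ((mh τ e (((i : ℝ) + 1) * ℓ e / (N e : ℝ)) - mh τ e ((i : ℝ) * ℓ e / (N e : ℝ))) * ((N e : ℝ) / ℓ e)) ^ 2 * (1 / ρh τ e ((i : ℝ) * ℓ e / (N e : ℝ)) ^ 2)) + (b e * (1 / ρh τ e ((i : ℝ) * ℓ e / (N e : ℝ)) ^ 2)) * |mh τ e ((i : ℝ) * ℓ e / (N e : ℝ)) + (x - ((i : ℝ) * ℓ e / (N e : ℝ))) * ((mh τ e (((i : ℝ) + 1) * ℓ e / (N e : ℝ)) - mh τ e ((i : ℝ) * ℓ e / (N e : ℝ))) / (ℓ e / (N e : ℝ)))| ^ 3) _ ?_ ?_ ?_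
    · intro i hi x hx
      beta_reduce
      rw [hrepρ τ hτ e i hi x ⟨hx.1.le, hx.2⟩, hrepm τ hτ e i hi x ⟨hx.1.le, hx.2.le⟩,
        hDxm τ e i hi x ⟨hx.1.le, hx.2⟩]
      ring
    · intro i hi
      exact Continuous.continuousOn (by fun_prop)
    · intro i hi
      beta_reduce
      rw [hpe' e i]
      exact pn_int_const_abs _ _ _ _ _ _

  have hclamp : ∀ s ∈ Set.Icc (0:ℝ) T, min (max s 0) T = s := by
    intro s hs
    rw [max_eq_left hs.1, min_eq_left hs.2]
  have hprojmem : ∀ s : ℝ, min (max s 0) T ∈ Set.Icc (0:ℝ) T :=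
    fun s => ⟨le_min (le_max_right s 0) hT, min_le_right _ T⟩
  constructor
  · -- mass conservation
    have hmkey : ∀ τ₀ ∈ Set.Icc (0:ℝ) T,
        HasDerivWithinAt (fun τ => ∑ e : E, ∑ i ∈ Finset.range (N e), ((ℓ e / (N e : ℝ)) * ρh τ e ((i : ℝ) * ℓ e / (N e : ℝ)))) 0 (Set.Icc (0:ℝ) T) τ₀ := by
      intro τ₀ hτ₀
      have hd : HasDerivWithinAt (fun τ => ∑ e : E, ∑ i ∈ Finset.range (N e), ((ℓ e / (N e : ℝ)) * ρh τ e ((i : ℝ) * ℓ e / (N e : ℝ))))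
          (∑ e : E, ∑ i ∈ Finset.range (N e), ((ℓ e / (N e : ℝ)) * ρht τ₀ e ((i : ℝ) * ℓ e / (N e : ℝ)))) (Set.Icc (0:ℝ) T) τ₀ := by
        refine HasDerivWithinAt.fun_sum fun e _ => ?_
        refine HasDerivWithinAt.fun_sum fun i hi => ?_
        exact ((hder τ₀ hτ₀ e ((i : ℝ) * ℓ e / (N e : ℝ))).1).const_mul _
      have hz : (∑ e : E, ∑ i ∈ Finset.range (N e), ((ℓ e / (N e : ℝ)) * ρht τ₀ e ((i : ℝ) * ℓ e / (N e : ℝ)))) = 0 := by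
        have hqone : IsPwConst N ℓ (fun _ _ => (1:ℝ)) := fun e i hi x hx => rfl
        rw [← evalRt1 τ₀ hτ₀, (heqs τ₀ hτ₀).1 _ hqone, evalDx1 τ₀ hτ₀]
        have htel : (∑ e : E, ∑ i ∈ Finset.range (N e), ((mh τ₀ e (((i : ℝ) + 1) * ℓ e / (N e : ℝ)) - mh τ₀ e ((i : ℝ) * ℓ e / (N e : ℝ))))) = ∑ e : E, (mh τ₀ e (ℓ e) - mh τ₀ e 0) := by
          refine Finset.sum_congr rfl fun e _ => ?_
          have h1 := Finset.sum_range_sub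
            (f := fun j : ℕ => mh τ₀ e ((j : ℝ) * ℓ e / (N e : ℝ))) (n := N e)
          rw [show ((N e : ℕ) : ℝ) * ℓ e / (N e : ℝ) = ℓ e by
              have h1 : (N e : ℝ) ≠ 0 := hne e
              field_simp,
            show ((0 : ℕ) : ℝ) * ℓ e / (N e : ℝ) = 0 by norm_num] at h1
          rw [← h1]
          refine Finset.sum_congr rfl fun i _ => ?_
          push_cast
          ring_nf
        rw [htel, ← pn_sum_vtxSum src dst ℓ (mh τ₀)]
        simp [((hsp τ₀ hτ₀).2).2]
      rw [hz] at hd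
      exact hd
    have hMconst := constant_of_derivWithin_zero
      (fun τ hτ => (hmkey τ hτ).differentiableWithinAt)
      (fun τ hτ => (hmkey τ (Set.mem_Icc_of_Ico hτ)).derivWithin (hUD τ (Set.mem_Icc_of_Ico hτ)))
      t ht
    rw [evalMass t ht, evalMass 0 h0S]
    simpa using hMconst
  · -- energy identity
    have hDncont : Continuous (fun τ : ℝ => ∑ e : E, ∑ i ∈ Finset.range (N e), ((ℓ e / (N e : ℝ)) * (a e * ((mh (min (max τ 0) T) e (((i : ℝ) + 1) * ℓ e / (N e : ℝ)) - mh (min (max τ 0) T) e ((i : ℝ) * ℓ e / (N e : ℝ))) * ((N e : ℝ) / ℓ e)) ^ 2 * (1 / ρh (min (max τ 0) T) e ((i : ℝ) * ℓ e / (N e : ℝ)) ^ 2)) + (b e * (1 / ρh (min (max τ 0) T) e ((i : ℝ) * ℓ e / (N e : ℝ)) ^ 2)) * (∫ x in ((i : ℝ) * ℓ e / (N e : ℝ))..(((i : ℝ) + 1) * ℓ e / (N e : ℝ)), |mh (min (max τ 0) T) e ((i : ℝ) * ℓ e / (N e : ℝ)) + (x - ((i : ℝ) * ℓ e / (N e :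 ℝ))) * ((mh (min (max τ 0) T) e (((i : ℝ) + 1) * ℓ e / (N e : ℝ)) - mh (min (max τ 0) T) e ((i : ℝ) * ℓ e / (N e : ℝ))) / (ℓ e / (N e : ℝ)))| ^ 3))) := by
      refine continuous_finset_sum _ fun e _ => continuous_finset_sum _ fun i hi => ?_
      have hiN := Finset.mem_range.mp hi
      have hMcont : ∀ pt : ℝ, Continuous (fun τ : ℝ => mh (min (max τ 0) T) e pt) := by
        intro pt
        exact ContinuousOn.comp_continuous
          (fun s hs => ((hder s hs e pt).2).continuousWithinAt)
          (by fun_prop) hprojmem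
      have hRcont : Continuous (fun τ : ℝ => ρh (min (max τ 0) T) e ((i : ℝ) * ℓ e / (N e : ℝ))) :=
        ContinuousOn.comp_continuous
          (fun s hs => ((hder s hs e ((i : ℝ) * ℓ e / (N e : ℝ))).1).continuousWithinAt)
          (by fun_prop) hprojmem
      have hRne : ∀ τ : ℝ, (ρh (min (max τ 0) T) e ((i : ℝ) * ℓ e / (N e : ℝ))) ^ 2 ≠ 0 :=
        fun τ => pow_ne_zero 2 (hR _ (hprojmem τ) e i hiN).ne'
      have hMc := hMcont ((i : ℝ) * ℓ e / (N e : ℝ))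
      have hMc' := hMcont (((i : ℝ) + 1) * ℓ e / (N e : ℝ))
      have hsb : Continuous (fun τ : ℝ =>
          (mh (min (max τ 0) T) e (((i : ℝ) + 1) * ℓ e / (N e : ℝ)) - mh (min (max τ 0) T) e ((i : ℝ) * ℓ e / (N e : ℝ))) * ((N e : ℝ) / ℓ e)) :=
        (hMc'.sub hMc).mul continuous_const
      have hR2 : Continuous (fun τ : ℝ => 1 / (ρh (min (max τ 0) T) e ((i : ℝ) * ℓ e / (N e : ℝ))) ^ 2) :=
        continuous_const.div (hRcont.pow 2) hRne
      have hJ : Continuous (fun τ : ℝ => ∫ x in ((i : ℝ) * ℓ e / (N e : ℝ))..(((i : ℝ) + 1) * ℓ e / (N e : ℝ)),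
          |mh (min (max τ 0) T) e ((i : ℝ) * ℓ e / (N e : ℝ))
            + (x - ((i : ℝ) * ℓ e / (N e : ℝ))) * ((mh (min (max τ 0) T) e (((i : ℝ) + 1) * ℓ e / (N e : ℝ)) - mh (min (max τ 0) T) e ((i : ℝ) * ℓ e / (N e : ℝ))) / (ℓ e / (N e : ℝ)))| ^ 3) := by
        have hu : Continuous (fun q : ℝ × ℝ =>
            |mh (min (max q.1 0) T) e ((i : ℝ) * ℓ e / (N e : ℝ))
              + (q.2 - ((i : ℝ) * ℓ e / (N e : ℝ))) * ((mh (min (max q.1 0) T) e (((i : ℝ) + 1) * ℓ e / (N e : ℝ)) - mh (min (max q.1 0) T) e ((i : ℝ) * ℓ e / (N e : ℝ))) / (ℓ e / (N e : ℝ)))| ^ 3) :=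
          (((hMc.comp continuous_fst).add ((continuous_snd.sub continuous_const).mul
            (((hMc'.comp continuous_fst).sub (hMc.comp continuous_fst)).div_const _))).abs).pow 3
        exact intervalIntegral.continuous_parametric_intervalIntegral_of_continuous'
          hu _ _
      exact (continuous_const.mul ((continuous_const.mul (hsb.pow 2)).mul hR2)).add
        ((continuous_const.mul hR2).mul hJ)
    have hkey : ∀ τ₀ ∈ Set.Icc (0:ℝ) T,
        HasDerivWithinAt (fun τ => ∑ e : E, ∑ i ∈ Finset.range (N e), ((ℓ e / (N e : ℝ)) * (mh τ e ((i : ℝ) * ℓ e / (N e : ℝ)) ^ 2 + mh τ e ((i : ℝ) * ℓ e / (N e : ℝ)) * mh τ e (((i : ℝ) + 1) * ℓ e / (N e : ℝ)) + mh τ e (((i : ℝ) + 1) * ℓ e / (N e : ℝ)) ^ 2) / 3 * (2 * ρh τ e ((i : ℝ) * ℓ e / (N e : ℝ)))⁻¹ + (ℓ e / (N e : ℝ)) * (c e * ρh τ e ((i : ℝ) * ℓ e / (N e : ℝ)) ^ γ / (γ - 1))))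
          (∑ e : E, ∑ i ∈ Finset.range (N e), (((ℓ e / (N e : ℝ)) * (2 * mht τ₀ e ((i : ℝ) * ℓ e / (N e : ℝ)) * mh τ₀ e ((i : ℝ) * ℓ e / (N e : ℝ)) + mht τ₀ e ((i : ℝ) * ℓ e / (N e : ℝ)) * mh τ₀ e (((i : ℝ) + 1) * ℓ e / (N e : ℝ)) + mht τ₀ e (((i : ℝ) + 1) * ℓ e / (N e : ℝ)) * mh τ₀ e ((i : ℝ) * ℓ e / (N e : ℝ)) + 2 * mht τ₀ e (((i : ℝ) + 1) * ℓ e / (N e : ℝ)) * mh τ₀ e (((i : ℝ) + 1) * ℓ e / (N e : ℝ))) / 6 * (1 / ρh τ₀ e ((i : ℝ) * ℓ e / (N e : ℝ))) - (ℓ e / (N e : ℝ)) * (mh τ₀ e ((i : ℝ) * ℓ e / (N e : ℝ)) ^ 2 + mh τ₀ e ((i : ℝ) * ℓ e / (N e : ℝ)) * mh τ₀ e (((i : ℝ) + 1) * ℓ e / (N e : ℝ)) + mh τ₀ e (((i : ℝ) + 1) * ℓ e / (N e : ℝ)) ^ 2) / 3 * (ρht τ₀ e ((i : ℝ) * ℓ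 e / (N e : ℝ)) / (2 * ρh τ₀ e ((i : ℝ) * ℓ e / (N e : ℝ)) ^ 2))) + ((ℓ e / (N e : ℝ)) * (ρht τ₀ e ((i : ℝ) * ℓ e / (N e : ℝ)) * (c e * γ / (γ - 1) * ρh τ₀ e ((i : ℝ) * ℓ e / (N e : ℝ)) ^ (γ - 1)))))) (Set.Icc (0:ℝ) T) τ₀ := by
      intro τ₀ hτ₀
      refine HasDerivWithinAt.fun_sum fun e _ => ?_
      refine HasDerivWithinAt.fun_sum fun i hi => ?_
      have hiN := Finset.mem_range.mp hi
      have hA := (hder τ₀ hτ₀ e ((i : ℝ) * ℓ e / (N e : ℝ))).2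
      have hA' := (hder τ₀ hτ₀ e (((i : ℝ) + 1) * ℓ e / (N e : ℝ))).2
      have hRd := (hder τ₀ hτ₀ e ((i : ℝ) * ℓ e / (N e : ℝ))).1
      have hRne : ρh τ₀ e ((i : ℝ) * ℓ e / (N e : ℝ)) ≠ 0 := (hR τ₀ hτ₀ e i hiN).ne'
      have h2Rne : 2 * ρh τ₀ e ((i : ℝ) * ℓ e / (N e : ℝ)) ≠ 0 := mul_ne_zero two_ne_zero hRne
      have hq := ((hA.pow 2).add (hA.mul hA')).add (hA'.pow 2)
      have hpart1 := ((hq.const_mul (ℓ e / (N e : ℝ))).div_const 3).mul ((hRd.const_mul 2).inv h2Rne)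
      have hrpow := (Real.hasDerivAt_rpow_const (p := γ) (Or.inl hRne)).comp_hasDerivWithinAt τ₀ hRd
      have hpart2 := ((hrpow.const_mul (c e)).div_const (γ - 1)).const_mul (ℓ e / (N e : ℝ))
      have htot := hpart1.add hpart2
      refine htot.congr_deriv ?_
      simp only [Pi.add_apply, Pi.mul_apply, Pi.pow_apply, Pi.inv_apply]
      generalize ρh τ₀ e ((i : ℝ) * ℓ e / (N e : ℝ)) ^ (γ - 1) = RP
      generalize mht τ₀ e (((i : ℝ) + 1) * ℓ e / (N e : ℝ)) = At1v
      generalize mht τ₀ e ((i : ℝ) * ℓ e / (N e : ℝ)) = Atv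
      generalize mh τ₀ e (((i : ℝ) + 1) * ℓ e / (N e : ℝ)) = A1v
      generalize mh τ₀ e ((i : ℝ) * ℓ e / (N e : ℝ)) = Av
      generalize ρht τ₀ e ((i : ℝ) * ℓ e / (N e : ℝ)) = Rtv
      revert hRne h2Rne
      generalize ρh τ₀ e ((i : ℝ) * ℓ e / (N e : ℝ)) = Rv
      intro hRne h2Rne
      push_cast
      field_simp
      ring
    have hval56 : ∀ τ₀ ∈ Set.Icc (0:ℝ) T,
        (∑ e : E, ∑ i ∈ Finset.range (N e), (((ℓ e / (N e : ℝ)) * (2 * mht τ₀ e ((i : ℝ) * ℓ e / (N e : ℝ)) * mh τ₀ e ((i : ℝ) * ℓ e / (N e : ℝ)) + mht τ₀ e ((i : ℝ) * ℓ e / (N e : ℝ)) * mh τ₀ e (((i : ℝ) + 1) * ℓ e / (N e : ℝ)) + mht τ₀ e (((i : ℝ) + 1) * ℓ e / (N e : ℝ)) * mh τ₀ e ((i : ℝ) * ℓ e / (N e : ℝ)) + 2 * mht τ₀ e (((i : ℝ) + 1) * ℓ e / (N e : ℝ)) * mh τ₀ e (((i : ℝ) + 1) * ℓ e / (N e : ℝ)))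 / 6 * (1 / ρh τ₀ e ((i : ℝ) * ℓ e / (N e : ℝ))) - (ℓ e / (N e : ℝ)) * (mh τ₀ e ((i : ℝ) * ℓ e / (N e : ℝ)) ^ 2 + mh τ₀ e ((i : ℝ) * ℓ e / (N e : ℝ)) * mh τ₀ e (((i : ℝ) + 1) * ℓ e / (N e : ℝ)) + mh τ₀ e (((i : ℝ) + 1) * ℓ e / (N e : ℝ)) ^ 2) / 3 * (ρht τ₀ e ((i : ℝ) * ℓ e / (N e : ℝ)) / (2 * ρh τ₀ e ((i : ℝ) * ℓ e / (N e : ℝ)) ^ 2))) + ((ℓ e / (N e : ℝ)) * (ρht τ₀ e ((i : ℝ) * ℓ e / (N e : ℝ)) * (c e * γ / (γ - 1) * ρh τ₀ e ((i : ℝ) * ℓ e / (N e : ℝ)) ^ (γ - 1))))))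
          = -(∑ e : E, ∑ i ∈ Finset.range (N e), ((ℓ e / (N e : ℝ)) * (a e * ((mh (min (max τ₀ 0) T) e (((i : ℝ) + 1) * ℓ e / (N e : ℝ)) - mh (min (max τ₀ 0) T) e ((i : ℝ) * ℓ e / (N e : ℝ))) * ((N e : ℝ) / ℓ e)) ^ 2 * (1 / ρh (min (max τ₀ 0) T) e ((i : ℝ) * ℓ e / (N e : ℝ)) ^ 2)) + (b e * (1 / ρh (min (max τ₀ 0) T) e ((i : ℝ) * ℓ e / (N e : ℝ)) ^ 2)) * (∫ x in ((i : ℝ) * ℓ e / (N e : ℝ))..(((i : ℝ) + 1) * ℓ e / (N e : ℝ)), |mh (min (max τ₀ 0) T) e ((i : ℝ) * ℓ e / (N e : ℝ)) + (x - ((i : ℝ) * ℓ e / (N e : ℝ))) * ((mh (min (max τ₀ 0) T) e (((i : ℝ) + 1) * ℓ e / (N e : ℝ)) - mh (min (max τ₀ 0) T) e ((i : ℝ) * ℓ e / (N e : ℝ))) / (ℓ e / (N e : ℝ)))| ^ 3))) := by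
      intro τ₀ hτ₀
      rw [hclamp τ₀ hτ₀]
      have hqpw : IsPwConst N ℓ (fun e x => c e * γ / (γ - 1) * ρh τ₀ e x ^ (γ - 1)) := by
        intro e i hi x hx
        beta_reduce
        rw [hrepρ τ₀ hτ₀ e i hi x hx]
      have hsplit : (∑ e : E, ∑ i ∈ Finset.range (N e), (((ℓ e / (N e : ℝ)) * (2 * mht τ₀ e ((i : ℝ) * ℓ e / (N e : ℝ)) * mh τ₀ e ((i : ℝ) * ℓ e / (N e : ℝ)) + mht τ₀ e ((i : ℝ) * ℓ e / (N e : ℝ)) * mh τ₀ e (((i : ℝ) + 1) * ℓ e / (N e : ℝ)) + mht τ₀ e (((i : ℝ) + 1) * ℓ e / (N e : ℝ)) * mh τ₀ e ((i : ℝ) * ℓ e / (N e : ℝ)) + 2 * mht τ₀ e (((i : ℝ) + 1) * ℓ e / (N e : ℝ)) * mh τ₀ e (((i : ℝ) + 1) * ℓ e / (N e : ℝ))) / 6 * (1 / ρh τ₀ e ((i : ℝ) * ℓ e / (N e : ℝ))) - (ℓ e / (N e : ℝ)) * (mh τ₀ e ((i : ℝ) * ℓ e / (N e : ℝ)) ^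 2 + mh τ₀ e ((i : ℝ) * ℓ e / (N e : ℝ)) * mh τ₀ e (((i : ℝ) + 1) * ℓ e / (N e : ℝ)) + mh τ₀ e (((i : ℝ) + 1) * ℓ e / (N e : ℝ)) ^ 2) / 3 * (ρht τ₀ e ((i : ℝ) * ℓ e / (N e : ℝ)) / (2 * ρh τ₀ e ((i : ℝ) * ℓ e / (N e : ℝ)) ^ 2))) + ((ℓ e / (N e : ℝ)) * (ρht τ₀ e ((i : ℝ) * ℓ e / (N e : ℝ)) * (c e * γ / (γ - 1) * ρh τ₀ e ((i : ℝ) * ℓ e / (N e : ℝ)) ^ (γ - 1))))))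
          = (∑ e : E, ∑ i ∈ Finset.range (N e), ((ℓ e / (N e : ℝ)) * (2 * mht τ₀ e ((i : ℝ) * ℓ e / (N e : ℝ)) * mh τ₀ e ((i : ℝ) * ℓ e / (N e : ℝ)) + mht τ₀ e ((i : ℝ) * ℓ e / (N e : ℝ)) * mh τ₀ e (((i : ℝ) + 1) * ℓ e / (N e : ℝ)) + mht τ₀ e (((i : ℝ) + 1) * ℓ e / (N e : ℝ)) * mh τ₀ e ((i : ℝ) * ℓ e / (N e : ℝ)) + 2 * mht τ₀ e (((i : ℝ) + 1) * ℓ e / (N e : ℝ)) * mh τ₀ e (((i : ℝ) + 1) * ℓ e / (N e : ℝ))) / 6 * (1 / ρh τ₀ e ((i : ℝ) * ℓ e / (N e : ℝ))) - (ℓ e / (N e : ℝ)) * (mh τ₀ e ((i : ℝ) * ℓ e / (N e : ℝ)) ^ 2 + mh τ₀ e ((i : ℝ) * ℓ e / (N e : ℝ)) * mh τ₀ e (((i : ℝ) + 1) * ℓ e / (N e : ℝ)) + mh τ₀ e (((i : ℝ) + 1) * ℓ e / (N e : ℝ)) ^ 2) / 3 * (ρht τ₀ e ((i : ℝ) * ℓ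 e / (N e : ℝ)) / (2 * ρh τ₀ e ((i : ℝ) * ℓ e / (N e : ℝ)) ^ 2))))
            + (∑ e : E, ∑ i ∈ Finset.range (N e), ((ℓ e / (N e : ℝ)) * (ρht τ₀ e ((i : ℝ) * ℓ e / (N e : ℝ)) * (c e * γ / (γ - 1) * ρh τ₀ e ((i : ℝ) * ℓ e / (N e : ℝ)) ^ (γ - 1))))) := by
        simp only [Finset.sum_add_distrib]
      rw [hsplit, ← evalLHS τ₀ hτ₀, ← evalRtP τ₀ hτ₀,
        (heqs τ₀ hτ₀).2 (mh τ₀) ((hsp τ₀ hτ₀).2),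
        (heqs τ₀ hτ₀).1 (fun e x => c e * γ / (γ - 1) * ρh τ₀ e x ^ (γ - 1)) hqpw,
        evalRHS1 τ₀ hτ₀, evalRHS2 τ₀ hτ₀, evalDxP τ₀ hτ₀]
      simp only [← Finset.sum_neg_distrib, ← Finset.sum_sub_distrib, ← Finset.sum_add_distrib]
      refine Finset.sum_congr rfl fun e _ => ?_
      refine Finset.sum_congr rfl fun i hi => ?_
      have hiN := Finset.mem_range.mp hi
      have hRne : ρh τ₀ e ((i : ℝ) * ℓ e / (N e : ℝ)) ≠ 0 := (hR τ₀ hτ₀ e i hiN).ne'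
      generalize (∫ x in ((i : ℝ) * ℓ e / (N e : ℝ))..(((i : ℝ) + 1) * ℓ e / (N e : ℝ)), |mh τ₀ e ((i : ℝ) * ℓ e / (N e : ℝ)) + (x - ((i : ℝ) * ℓ e / (N e : ℝ))) * ((mh τ₀ e (((i : ℝ) + 1) * ℓ e / (N e : ℝ)) - mh τ₀ e ((i : ℝ) * ℓ e / (N e : ℝ))) / (ℓ e / (N e : ℝ)))| ^ 3) = Jv
      generalize c e * γ / (γ - 1) * ρh τ₀ e ((i : ℝ) * ℓ e / (N e : ℝ)) ^ (γ - 1) = PPv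
      generalize mh τ₀ e (((i : ℝ) + 1) * ℓ e / (N e : ℝ)) = A1v
      generalize mh τ₀ e ((i : ℝ) * ℓ e / (N e : ℝ)) = Av
      revert hRne
      generalize ρh τ₀ e ((i : ℝ) * ℓ e / (N e : ℝ)) = Rv
      intro hRne
      have h1 : (N e : ℝ) ≠ 0 := hne e
      have h2 : ℓ e ≠ 0 := (hℓ e).ne'
      field_simp
      ring
    have hG : ∀ τ₀ ∈ Set.Icc (0:ℝ) T, HasDerivWithinAt
        (fun τ => (∑ e : E, ∑ i ∈ Finset.range (N e), ((ℓ e / (N e : ℝ)) * (mh τ e ((i : ℝ) * ℓ e / (N e : ℝ)) ^ 2 + mh τ e ((i : ℝ) * ℓ e / (N e : ℝ)) * mh τ e (((i : ℝ) + 1) * ℓ e / (N e : ℝ)) + mh τ e (((i : ℝ) + 1) * ℓ e / (N e : ℝ)) ^ 2) / 3 * (2 * ρh τ e ((i : ℝ) * ℓ e / (N e : ℝ)))⁻¹ + (ℓ e / (N e : ℝ)) * (c e * ρh τ e ((i : ℝ) * ℓ e / (N e : ℝ)) ^ γ / (γ - 1)))) + ∫ s in (0:ℝ)..τ, (∑ e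 : E, ∑ i ∈ Finset.range (N e), ((ℓ e / (N e : ℝ)) * (a e * ((mh (min (max s 0) T) e (((i : ℝ) + 1) * ℓ e / (N e : ℝ)) - mh (min (max s 0) T) e ((i : ℝ) * ℓ e / (N e : ℝ))) * ((N e : ℝ) / ℓ e)) ^ 2 * (1 / ρh (min (max s 0) T) e ((i : ℝ) * ℓ e / (N e : ℝ)) ^ 2)) + (b e * (1 / ρh (min (max s 0) T) e ((i : ℝ) * ℓ e / (N e : ℝ)) ^ 2)) * (∫ x in ((i : ℝ) * ℓ e / (N e : ℝ))..(((i : ℝ) + 1) * ℓ e / (N e : ℝ)), |mh (min (max s 0) T) e ((i : ℝ) * ℓ e / (N e : ℝ)) + (x - ((i : ℝ) * ℓ e / (N e : ℝ))) * ((mh (min (max s 0) T) e (((i : ℝ) + 1) * ℓ e / (N e : ℝ)) - mh (min (max s 0) T) e ((i : ℝ) * ℓ e / (N e : ℝ))) / (ℓ e / (N e : ℝ)))| ^ 3)))) 0 (Set.Icc (0:ℝ) T) τ₀ := by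
      intro τ₀ hτ₀
      have h2 : HasDerivWithinAt (fun τ : ℝ => ∫ s in (0:ℝ)..τ, (∑ e : E, ∑ i ∈ Finset.range (N e), ((ℓ e / (N e : ℝ)) * (a e * ((mh (min (max s 0) T) e (((i : ℝ) + 1) * ℓ e / (N e : ℝ)) - mh (min (max s 0) T) e ((i : ℝ) * ℓ e / (N e : ℝ))) * ((N e : ℝ) / ℓ e)) ^ 2 * (1 / ρh (min (max s 0) T) e ((i : ℝ) * ℓ e / (N e : ℝ)) ^ 2)) + (b e * (1 / ρh (min (max s 0) T) e ((i : ℝ) * ℓ e / (N e : ℝ)) ^ 2)) * (∫ x in ((i : ℝ) * ℓ e / (N e : ℝ))..(((i : ℝ) + 1) * ℓ e / (N e : ℝ)), |mh (min (max s 0) T) e ((i : ℝ) * ℓ e / (N e : ℝ)) + (x - ((i : ℝ) * ℓ e / (N e : ℝ))) * ((mh (min (max s 0) T) e (((i : ℝ) + 1) * ℓ e / (N e : ℝ)) - mh (min (max s 0) T) e ((i : ℝ) * ℓ e / (N e : ℝ))) / (ℓ e / (N e : ℝ)))| ^ 3))))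
          (∑ e : E, ∑ i ∈ Finset.range (N e), ((ℓ e / (N e : ℝ)) * (a e * ((mh (min (max τ₀ 0) T) e (((i : ℝ) + 1) * ℓ e / (N e : ℝ)) - mh (min (max τ₀ 0) T) e ((i : ℝ) * ℓ e / (N e : ℝ))) * ((N e : ℝ) / ℓ e)) ^ 2 * (1 / ρh (min (max τ₀ 0) T) e ((i : ℝ) * ℓ e / (N e : ℝ)) ^ 2)) + (b e * (1 / ρh (min (max τ₀ 0) T) e ((i : ℝ) * ℓ e / (N e : ℝ)) ^ 2)) * (∫ x in ((i : ℝ) * ℓ e / (N e : ℝ))..(((i : ℝ) + 1) * ℓ e / (N e : ℝ)), |mh (min (max τ₀ 0) T) e ((i : ℝ) * ℓ e / (N e : ℝ)) + (x - ((i : ℝ) * ℓ e / (N e : ℝ))) * ((mh (min (max τ₀ 0) T) e (((i : ℝ) + 1) * ℓ e / (N e : ℝ)) - mh (min (max τ₀ 0) T) e ((i : ℝ) * ℓ e / (N e : ℝ))) / (ℓ e / (N e : ℝ)))| ^ 3))) (Set.Icc (0:ℝ) T) τ₀ :=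
        ((hDncont.integral_hasStrictDerivAt 0 τ₀).hasDerivAt).hasDerivWithinAt
      have h3 := (hkey τ₀ hτ₀).add h2
      refine h3.congr_deriv ?_
      rw [hval56 τ₀ hτ₀]
      ring
    have hconstE := constant_of_derivWithin_zero
      (fun τ hτ => (hG τ hτ).differentiableWithinAt)
      (fun τ hτ => (hG τ (Set.mem_Icc_of_Ico hτ)).derivWithin (hUD τ (Set.mem_Icc_of_Ico hτ)))
      t ht
    have hGt : (∑ e : E, ∑ i ∈ Finset.range (N e), ((ℓ e / (N e : ℝ)) * (mh t e ((i : ℝ) * ℓ e / (N e : ℝ)) ^ 2 + mh t e ((i : ℝ) * ℓ e / (N e : ℝ)) * mh t e (((i : ℝ) + 1) * ℓ e / (N e : ℝ)) + mh t e (((i : ℝ) + 1) * ℓ e / (N e : ℝ)) ^ 2) / 3 * (2 * ρh t e ((i : ℝ) * ℓ e / (N e : ℝ)))⁻¹ + (ℓ e / (N e : ℝ)) * (c e * ρh t e ((i : ℝ) * ℓ e / (N e : ℝ)) ^ γ / (γ - 1)))) + (∫ s in (0:ℝ)..t, (∑ e : E, ∑ i ∈ Finset.range (N e), ((ℓ e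 / (N e : ℝ)) * (a e * ((mh (min (max s 0) T) e (((i : ℝ) + 1) * ℓ e / (N e : ℝ)) - mh (min (max s 0) T) e ((i : ℝ) * ℓ e / (N e : ℝ))) * ((N e : ℝ) / ℓ e)) ^ 2 * (1 / ρh (min (max s 0) T) e ((i : ℝ) * ℓ e / (N e : ℝ)) ^ 2)) + (b e * (1 / ρh (min (max s 0) T) e ((i : ℝ) * ℓ e / (N e : ℝ)) ^ 2)) * (∫ x in ((i : ℝ) * ℓ e / (N e : ℝ))..(((i : ℝ) + 1) * ℓ e / (N e : ℝ)), |mh (min (max s 0) T) e ((i : ℝ) * ℓ e / (N e : ℝ)) + (x - ((i : ℝ) * ℓ e / (N e : ℝ))) * ((mh (min (max s 0) T) e (((i : ℝ) + 1) * ℓ e / (N e : ℝ)) - mh (min (max s 0) T) e ((i : ℝ) * ℓ e / (N e : ℝ))) / (ℓ e / (N e : ℝ)))| ^ 3)))) = (∑ e : E, ∑ i ∈ Finset.range (N e), ((ℓ e / (N e : ℝ)) * (mh 0 e ((i : ℝ) * ℓ e / (N e : ℝ)) ^ 2 + mh 0 e ((i : ℝ) * ℓ e / (N e : ℝ)) *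 mh 0 e (((i : ℝ) + 1) * ℓ e / (N e : ℝ)) + mh 0 e (((i : ℝ) + 1) * ℓ e / (N e : ℝ)) ^ 2) / 3 * (2 * ρh 0 e ((i : ℝ) * ℓ e / (N e : ℝ)))⁻¹ + (ℓ e / (N e : ℝ)) * (c e * ρh 0 e ((i : ℝ) * ℓ e / (N e : ℝ)) ^ γ / (γ - 1)))) := by
      simpa using hconstE
    have hDeq : Set.EqOn
        (fun s => ∑ e : E, ∫ x in (0:ℝ)..(ℓ e),
          (a e * Dx N ℓ (mh s) e x ^ 2 / ρh s e x ^ 2 + b e * |mh s e x| ^ 3 / ρh s e x ^ 2))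
        (fun s => ∑ e : E, ∑ i ∈ Finset.range (N e), ((ℓ e / (N e : ℝ)) * (a e * ((mh (min (max s 0) T) e (((i : ℝ) + 1) * ℓ e / (N e : ℝ)) - mh (min (max s 0) T) e ((i : ℝ) * ℓ e / (N e : ℝ))) * ((N e : ℝ) / ℓ e)) ^ 2 * (1 / ρh (min (max s 0) T) e ((i : ℝ) * ℓ e / (N e : ℝ)) ^ 2)) + (b e * (1 / ρh (min (max s 0) T) e ((i : ℝ) * ℓ e / (N e : ℝ)) ^ 2)) * (∫ x in ((i : ℝ) * ℓ e / (N e : ℝ))..(((i : ℝ) + 1) * ℓ e / (N e : ℝ)), |mh (min (max s 0) T) e ((i : ℝ) * ℓ e / (N e : ℝ)) + (x - ((i : ℝ) * ℓ e / (N e : ℝ))) * ((mh (min (max s 0) T) e (((i : ℝ) + 1) * ℓ e / (N e : ℝ)) - mh (min (max s 0) T) e ((i : ℝ) * ℓ e / (N e : ℝ))) / (ℓ e / (N e : ℝ)))| ^ 3))) (Set.uIcc 0 t) := by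
      intro s hs
      rw [Set.uIcc_of_le ht.1] at hs
      have hsS : s ∈ Set.Icc (0:ℝ) T := ⟨hs.1, hs.2.trans ht.2⟩
      simp only
      rw [evalD s hsS, hclamp s hsS]
    rw [evalE t ht, evalE 0 h0S, intervalIntegral.integral_congr hDeq]
    exact hGt
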